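/- For every graph G without isolated vertices, χ_dd(G) ≤ χ(G) · γ(G), where χ(G) is the chromatic number and γ(G) is the domination number. -/
import Mathlib


open SimpleGraph

/-- A vertex `v` dominates a set `S` if every vertex of `S` is in the closed
neighborhood of `v`. -/
def Dominates {V : Type*} (G : SimpleGraph V) (v : V) (S : Set V) : Prop :=
  ∀ u ∈ S, u = v ∨ G.Adj v u

/-- A proper coloring is a dominator coloring if every vertex dominates some
(nonempty) color class. -/
def IsDominatorColoring {V : Type*} (G : SimpleGraph V) {k : ℕ}
    (c : G.Coloring (Fin k)) : Prop :=
  ∀ v : V, ∃ i : Fin k, (∃ u, c u = i) ∧ Dominates G v {u | c u = i}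

/-- A proper coloring is a dominated coloring if every nonempty color class is
dominated by some vertex (adjacent to all of its members). -/
def IsDominatedColoring {V : Type*} (G : SimpleGraph V) {k : ℕ}
    (c : G.Coloring (Fin k)) : Prop :=
  ∀ i : Fin k, (∃ u, c u = i) → ∃ v : V, ∀ u, c u = i → G.Adj v u

/-- A domination coloring: every vertex dominates a color class and every
color class is dominated by a vertex. -/
def IsDominationColoring {V : Type*} (G : SimpleGraph V) {k : ℕ}
    (c : G.Coloring (Fin k)) : Prop :=
  IsDominatorColoring G c ∧ IsDominatedColoring G c

/-- The domination chromatic number χ_dd. -/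
noncomputable def ddChromaticNumber {V : Type*} (G : SimpleGraph V) : ℕ :=
  sInf {k | ∃ c : G.Coloring (Fin k), IsDominationColoring G c}

/-- The dominator chromatic number χ_d. -/
noncomputable def dChromaticNumber {V : Type*} (G : SimpleGraph V) : ℕ :=
  sInf {k | ∃ c : G.Coloring (Fin k), IsDominatorColoring G c}

/-- The dominated chromatic number χ_dom. -/
noncomputable def domChromaticNumber {V : Type*} (G : SimpleGraph V) : ℕ :=
  sInf {k | ∃ c : G.Coloring (Fin k), IsDominatedColoring G c}

/-- A dominating set of a graph. -/
def IsDominatingSet {V : Type*} (G : SimpleGraph V) (s : Finset V) : Prop :=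
  ∀ v : V, ∃ u ∈ s, u = v ∨ G.Adj u v

/-- The domination number γ. -/
noncomputable def dominationNumber {V : Type*} (G : SimpleGraph V) : ℕ :=
  sInf {k | ∃ s : Finset V, s.card = k ∧ IsDominatingSet G s}

theorem stmt1 {V : Type*} [Fintype V] (G : SimpleGraph V)
    (h : ∀ v : V, ∃ u, G.Adj v u) :
    (ddChromaticNumber G : ℕ∞) ≤
      G.chromaticNumber * (dominationNumber G : ℕ∞) := by
  classical
  -- obtain a minimum dominating set
  have hne : {k | ∃ s : Finset V, s.card = k ∧ IsDominatingSet G s}.Nonempty :=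
    ⟨Finset.univ.card, Finset.univ, rfl, fun v => ⟨v, Finset.mem_univ v, Or.inl rfl⟩⟩
  obtain ⟨s, hcard, hdom⟩ := Nat.sInf_mem hne
  -- chromatic number as a natural number
  have hcol : G.Colorable (ENat.toNat G.chromaticNumber) :=
    G.colorable_chromaticNumber_of_fintype
  set n := ENat.toNat G.chromaticNumber with hn
  have hχ : (n : ℕ∞) = G.chromaticNumber := by
    rw [hn]
    exact ENat.coe_toNat (chromaticNumber_ne_top_iff_exists.mpr
      ⟨Fintype.card V, G.colorable_of_fintype⟩)
  obtain ⟨c0⟩ := hcol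
  -- dominator assignment
  have hdex : ∀ u : V, u ∉ s → ∃ j : Fin s.card,
      G.Adj ((s.equivFin.symm j : s) : V) u := by
    intro u hu
    obtain ⟨w, hw, hwu⟩ := hdom u
    refine ⟨s.equivFin ⟨w, hw⟩, ?_⟩
    rw [Equiv.symm_apply_apply]
    rcases hwu with rfl | hadj
    · exact absurd hw hu
    · exact hadj
  set d : V → Fin s.card := fun u =>
    if hu : u ∈ s then s.equivFin ⟨u, hu⟩ else (hdex u hu).choose with hd
  have hdmem : ∀ (u : V) (hu : u ∈ s), d u = s.equivFin ⟨u, hu⟩ := by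
    intro u hu; simp [hd, hu]
  have hdadj : ∀ (u : V), u ∉ s → G.Adj ((s.equivFin.symm (d u) : s) : V) u := by
    intro u hu
    have : d u = (hdex u hu).choose := by simp [hd, hu]
    rw [this]
    exact (hdex u hu).choose_spec
  -- the combined coloring
  set C : G.Coloring (Fin (n * s.card)) :=
    Coloring.mk (fun u => finProdFinEquiv (c0 u, d u)) (by
      intro a b hab heq
      have := finProdFinEquiv.injective heq
      exact c0.valid hab (congrArg Prod.fst this)) with hC
  have hCval : ∀ u : V, C u = finProdFinEquiv (c0 u, d u) := fun u => rfl
  -- color classes of vertices of s are singletons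
  have hsing : ∀ (w : V) (hw : w ∈ s) (u : V), C u = C w → u = w := by
    intro w hw u heq
    rw [hCval, hCval] at heq
    have hpair := finProdFinEquiv.injective heq
    have hc0 : c0 u = c0 w := congrArg Prod.fst hpair
    have hdu : d u = d w := congrArg Prod.snd hpair
    by_cases hu : u ∈ s
    · rw [hdmem u hu, hdmem w hw] at hdu
      have := s.equivFin.injective hdu
      exact Subtype.ext_iff.mp this
    · exfalso
      have hadj := hdadj u hu
      rw [hdu, hdmem w hw, Equiv.symm_apply_apply] at hadj
      exact c0.valid hadj hc0.symm
  -- d u is determined by C u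
  have hdC : ∀ (u : V) (i : Fin (n * s.card)), C u = i →
      d u = (finProdFinEquiv.symm i).2 := by
    intro u i hi
    rw [← hi, hCval, Equiv.symm_apply_apply]
  have hmem : IsDominationColoring G C := by
    constructor
    · -- dominator
      intro v
      obtain ⟨w, hw, hwv⟩ := hdom v
      refine ⟨C w, ⟨w, rfl⟩, ?_⟩
      intro u hu
      have : u = w := hsing w hw u hu
      subst this
      rcases hwv with rfl | hadj
      · exact Or.inl rfl
      · exact Or.inr hadj.symm
    · -- dominated
      intro i ⟨u0, hu0⟩
      set j := (finProdFinEquiv.symm i).2 with hj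
      set w : V := ((s.equivFin.symm j : s) : V) with hw
      have hws : w ∈ s := (s.equivFin.symm j).2
      by_cases hcw : C w = i
      · obtain ⟨x, hx⟩ := h w
        refine ⟨x, fun u hu => ?_⟩
        have : u = w := hsing w hws u (hu.trans hcw.symm)
        subst this
        exact hx.symm
      · refine ⟨w, fun u hu => ?_⟩
        have hdu : d u = j := hdC u i hu
        have hus : u ∉ s := by
          intro hus
          apply hcw
          rw [hdmem u hus] at hdu
          have huw : u = w := by
            rw [hw, ← hdu, Equiv.symm_apply_apply]
          rw [← huw]
          exact hu
        have := hdadj u hus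
        rw [hdu] at this
        exact this
  -- conclude
  have hle : ddChromaticNumber G ≤ n * s.card := Nat.sInf_le ⟨C, hmem⟩
  calc (ddChromaticNumber G : ℕ∞) ≤ ((n * s.card : ℕ) : ℕ∞) := by
        exact_mod_cast hle
    _ = G.chromaticNumber * (dominationNumber G : ℕ∞) := by
        rw [Nat.cast_mul, hχ, hcard]; rfl
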